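/- Let X_* be a one-point extension of a convex algebra X by a point * not in X. Then the set Pri(X_*) = {x in X : x does not adhere to *} is a prime ideal of X, i.e., it is an ideal and its complement in X is convex. -/

import Mathlib

/-- A convex algebra presented via binary convex combinations (Stone axioms).
`comb p x y` stands for `p x + (1-p) y`. -/
structure ConvexAlg (X : Type*) where
  comb : ℝ → X → X → X
  idem : ∀ p ∈ Set.Ioo (0:ℝ) 1, ∀ x, comb p x x = x
  comm : ∀ p ∈ Set.Ioo (0:ℝ) 1, ∀ x y, comb p x y = comb (1-p) y x
  assoc : ∀ p ∈ Set.Ioo (0:ℝ) 1, ∀ q ∈ Set.Ioo (0:ℝ) 1, ∀ x y z,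
    comb p (comb q x y) z = comb (p*q) x (comb (p*(1-q)/(1-p*q)) y z)

/-- `x` adheres to `y` : `p x + (1-p) y = y` for all `p ∈ (0,1)`. -/
def ConvexAlg.Adh {X : Type*} (A : ConvexAlg X) (x y : X) : Prop :=
  ∀ p ∈ Set.Ioo (0:ℝ) 1, A.comb p x y = y

def ConvexAlg.IsIdeal {X : Type*} (A : ConvexAlg X) (P : Set X) : Prop :=
  ∀ x ∈ P, ∀ y : X, ∀ p ∈ Set.Ioo (0:ℝ) 1, A.comb p x y ∈ P

def ConvexAlg.IsConvexSet {X : Type*} (A : ConvexAlg X) (C : Set X) : Prop :=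
  ∀ a ∈ C, ∀ b ∈ C, ∀ p ∈ Set.Ioo (0:ℝ) 1, A.comb p a b ∈ C

namespace CAaux

lemma mul_mem_Ioo {p q : ℝ} (hp : p ∈ Set.Ioo (0:ℝ) 1) (hq : q ∈ Set.Ioo (0:ℝ) 1) :
    p * q ∈ Set.Ioo (0:ℝ) 1 :=
  ⟨mul_pos hp.1 hq.1, by nlinarith [hp.1, hp.2, hq.1, hq.2]⟩

lemma ratio_mem_Ioo {p q : ℝ} (hp : p ∈ Set.Ioo (0:ℝ) 1) (hq : q ∈ Set.Ioo (0:ℝ) 1) :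
    p * (1 - q) / (1 - p * q) ∈ Set.Ioo (0:ℝ) 1 := by
  have h1 : (0:ℝ) < 1 - p * q := by nlinarith [hp.1, hp.2, hq.1, hq.2]
  constructor
  · exact div_pos (by nlinarith [hp.1, hq.2]) h1
  · rw [div_lt_one h1]; nlinarith [hp.2, hq.1]

/-- `comb p (comb q x y) y = comb (p q) x y`. -/
lemma combA {X : Type*} (A : ConvexAlg X) {p q : ℝ}
    (hp : p ∈ Set.Ioo (0:ℝ) 1) (hq : q ∈ Set.Ioo (0:ℝ) 1) (x y : X) :
    A.comb p (A.comb q x y) y = A.comb (p * q) x y := by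
  rw [A.assoc p hp q hq, A.idem _ (ratio_mem_Ioo hp hq)]

/-- `comb a x (comb b x z) = comb (a + b - a b) x z`. -/
lemma combB {X : Type*} (A : ConvexAlg X) {a b : ℝ}
    (ha : a ∈ Set.Ioo (0:ℝ) 1) (hb : b ∈ Set.Ioo (0:ℝ) 1) (x z : X) :
    A.comb a x (A.comb b x z) = A.comb (a + b - a * b) x z := by
  set P : ℝ := a + b - a * b with hP
  have hPIoo : P ∈ Set.Ioo (0:ℝ) 1 := by
    constructor
    · nlinarith [ha.1, hb.1, ha.2]
    · nlinarith [ha.2, hb.2]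
  set Q : ℝ := a / P with hQ
  have hPne : P ≠ 0 := ne_of_gt hPIoo.1
  have hQIoo : Q ∈ Set.Ioo (0:ℝ) 1 := by
    constructor
    · exact div_pos ha.1 hPIoo.1
    · rw [hQ, div_lt_one hPIoo.1]; nlinarith [hb.1, ha.2]
  have hPQ : P * Q = a := by rw [hQ]; field_simp
  have hratio : P * (1 - Q) / (1 - a) = b := by
    have : P * (1 - Q) = b * (1 - a) := by
      rw [mul_sub, mul_one, hPQ, hP]; ring
    rw [this]
    have h1a : (1:ℝ) - a ≠ 0 := by intro h; nlinarith [ha.2]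
    field_simp
  have h2 := A.assoc P hPIoo Q hQIoo x x z
  rw [A.idem Q hQIoo, hPQ, hratio] at h2
  rw [← h2]

/-- one parameter of adherence suffices. -/
lemma adh_of_exists {X : Type*} (A : ConvexAlg X) {u v : X} {r : ℝ}
    (hr : r ∈ Set.Ioo (0:ℝ) 1) (h : A.comb r u v = v) : A.Adh u v := by
  have h1r : (0:ℝ) < 1 - r := by linarith [hr.2]
  have h1r' : (1:ℝ) - r < 1 := by linarith [hr.1]
  have hIoo : ∀ n : ℕ, 1 - (1 - r) ^ (n + 1) ∈ Set.Ioo (0:ℝ) 1 := by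
    intro n
    have hpos : (0:ℝ) < (1 - r) ^ (n + 1) := pow_pos h1r _
    have hlt : (1 - r) ^ (n + 1) < 1 := pow_lt_one₀ (le_of_lt h1r) h1r' (Nat.succ_ne_zero n)
    exact ⟨by linarith, by linarith⟩
  have up : ∀ n : ℕ, A.comb (1 - (1 - r) ^ (n + 1)) u v = v := by
    intro n
    induction n with
    | zero => simpa using h
    | succ n ih =>
      have key := combB A hr (hIoo n) u v
      rw [ih] at key
      have harith : r + (1 - (1 - r) ^ (n + 1)) - r * (1 - (1 - r) ^ (n + 1))
          = 1 - (1 - r) ^ (n + 2) := by ring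
      rw [harith] at key
      rw [← key, h]
  intro q hq
  obtain ⟨n, hn⟩ := exists_pow_lt_of_lt_one (by linarith [hq.2] : (0:ℝ) < 1 - q) h1r'
  have hmono : (1 - r) ^ (n + 1) ≤ (1 - r) ^ n :=
    pow_le_pow_of_le_one (le_of_lt h1r) (le_of_lt h1r') (Nat.le_succ n)
  set rn : ℝ := 1 - (1 - r) ^ (n + 1) with hrn
  have hrnIoo : rn ∈ Set.Ioo (0:ℝ) 1 := hIoo n
  have hqlt : q < rn := by
    have : (1 - r) ^ (n + 1) < 1 - q := lt_of_le_of_lt hmono hn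
    simp only [hrn]; linarith
  have hdiv : q / rn ∈ Set.Ioo (0:ℝ) 1 := by
    constructor
    · exact div_pos hq.1 hrnIoo.1
    · rw [div_lt_one hrnIoo.1]; exact hqlt
  have key := combA A hdiv hrnIoo u v
  rw [up n, A.idem _ hdiv, div_mul_cancel₀ q (ne_of_gt hrnIoo.1)] at key
  exact key.symm

end CAaux

/-- for a one-point extension `E` of a convex algebra `A`
(the new point being `none : Option X`), the set `Pri = {x | ¬ x ⇝ *}` is a prime
ideal: it is an ideal of `A` whose complement (the set of adherence) is convex. -/
theorem pri_isPrimeIdeal {X : Type*} (A : ConvexAlg X) (E : ConvexAlg (Option X))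
    (hcomp : ∀ p ∈ Set.Ioo (0:ℝ) 1, ∀ x y : X,
      E.comb p (some x) (some y) = some (A.comb p x y)) :
    A.IsIdeal {x : X | ¬ E.Adh (some x) none} ∧
    A.IsConvexSet {x : X | E.Adh (some x) none} := by
  constructor
  · -- Ideal part
    intro x hx y p hp
    intro hadh
    apply hx
    have hhalf : (1/2 : ℝ) ∈ Set.Ioo (0:ℝ) 1 := by norm_num
    have h2 : E.comb (1/2) (E.comb p (some x) (some y)) none = none := by
      rw [hcomp p hp x y]
      exact hadh (1/2) hhalf
    rw [E.assoc (1/2) hhalf p hp] at h2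
    have hs : (1/2 : ℝ) * (1 - p) / (1 - 1/2 * p) ∈ Set.Ioo (0:ℝ) 1 :=
      CAaux.ratio_mem_Ioo hhalf hp
    have hr : (1/2 : ℝ) * p ∈ Set.Ioo (0:ℝ) 1 := CAaux.mul_mem_Ioo hhalf hp
    cases hw : E.comb (1/2 * (1 - p) / (1 - 1/2 * p)) (some y) none with
    | none =>
      rw [hw] at h2
      exact CAaux.adh_of_exists E hr h2
    | some v =>
      rw [hw, hcomp _ hr x v] at h2
      exact absurd h2 (by simp)
  · -- Convexity of the adherence set
    intro a ha b hb p hp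
    intro q hq
    have hs : q * (1 - p) / (1 - q * p) ∈ Set.Ioo (0:ℝ) 1 := CAaux.ratio_mem_Ioo hq hp
    have hr : q * p ∈ Set.Ioo (0:ℝ) 1 := CAaux.mul_mem_Ioo hq hp
    rw [← hcomp p hp a b, E.assoc q hq p hp, hb _ hs, ha _ hr]
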